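/- A metric space X has asymptotic property C if and only if trasdim(X) ≤ α for some countable ordinal α. -/

import Mathlib

open Metric Set Function

namespace APC

variable {X Y : Type*}

/-- A family `𝒰` of subsets of a metric space is `r`-disjoint if any two distinct members
are at distance at least `r`. -/
def RDisjoint [MetricSpace X] (r : ℝ) (𝒰 : Set (Set X)) : Prop :=
  ∀ U ∈ 𝒰, ∀ V ∈ 𝒰, U ≠ V → ∀ x ∈ U, ∀ y ∈ V, r ≤ dist x y

/-- A family `𝒰` is `R`-bounded if every member has diameter at most `R`. -/
def RBounded [MetricSpace X] (R : ℝ) (𝒰 : Set (Set X)) : Prop :=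
  ∀ U ∈ 𝒰, ∀ x ∈ U, ∀ y ∈ U, dist x y ≤ R

/-- A family is uniformly bounded if it is `R`-bounded for some `R > 0`. -/
def UnifBounded [MetricSpace X] (𝒰 : Set (Set X)) : Prop :=
  ∃ R : ℝ, 0 < R ∧ RBounded R 𝒰

/-- `asdim X ≤ n`. -/
def AsdimLE (X : Type*) [MetricSpace X] (n : ℕ) : Prop :=
  ∀ r : ℝ, 0 < r → ∃ 𝒰 : Fin (n + 1) → Set (Set X),
    (∀ i, UnifBounded (𝒰 i)) ∧ (∀ i, RDisjoint r (𝒰 i)) ∧ (⋃ i, ⋃₀ 𝒰 i) = Set.univ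

/-- `X` has finite asymptotic dimension. -/
def HasFiniteAsdim (X : Type*) [MetricSpace X] : Prop := ∃ n : ℕ, AsdimLE X n

/-- Asymptotic property C. -/
def HasAPC (X : Type*) [MetricSpace X] : Prop :=
  ∀ R : ℕ → ℝ, (∀ i, 0 < R i) → StrictMono R →
    ∃ n : ℕ, ∃ 𝒰 : Fin (n + 1) → Set (Set X),
      (∀ i, UnifBounded (𝒰 i)) ∧ (∀ i : Fin (n + 1), RDisjoint (R i) (𝒰 i)) ∧
      (⋃ i, ⋃₀ 𝒰 i) = Set.univ

/-- `M^a`, the derivative of a collection of finite nonempty subsets of `ℕ`. -/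
def deriv (M : Set (Finset ℕ)) (a : ℕ) : Set (Finset ℕ) :=
  {τ | τ.Nonempty ∧ a ∉ τ ∧ insert a τ ∈ M}

/-- `OrdLE α M` means `Ord M ≤ α` in the sense of Radul: either `M = ∅`
(so that `Ord M = 0`), or `Ord M^a < α` for every `a : ℕ`.  Defined by
well-founded recursion on the ordinal `α`. -/
def OrdLE : Ordinal.{0} → Set (Finset ℕ) → Prop :=
  Ordinal.lt_wf.fix (C := fun _ => Set (Finset ℕ) → Prop)
    (fun α IH M => M = ∅ ∨ ∀ a : ℕ, ∃ β : Ordinal.{0}, ∃ hβ : β < α, IH β hβ (deriv M a))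

/-- The collection `A(X,d)` of finite nonempty subsets `σ ⊆ ℕ` such that there is no
covering of `X` by uniformly bounded families `𝒰ᵢ` (`i ∈ σ`), each `i`-disjoint. -/
def AClass (X : Type*) [MetricSpace X] : Set (Finset ℕ) :=
  {σ | σ.Nonempty ∧ ¬ ∃ 𝒰 : ℕ → Set (Set X),
      (∀ i ∈ σ, UnifBounded (𝒰 i)) ∧ (∀ i ∈ σ, RDisjoint (i : ℝ) (𝒰 i)) ∧
      (⋃ i ∈ σ, ⋃₀ 𝒰 i) = Set.univ}

/-- `trasdim X ≤ α`. -/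
def TrasdimLE (X : Type*) [MetricSpace X] (α : Ordinal.{0}) : Prop :=
  OrdLE α (AClass X)

/-- The `(m,n)`-DTUT property: disjointness of the `(m,n)`-tiling through uniform
translation. -/
def DTUT (X : Type*) [MetricSpace X] (m n : ℕ) : Prop :=
  ∃ F : Fin m → ℕ,
    ∀ h : ℕ+ → ℕ+, ∀ k : Fin (m + 1) → ℕ+, StrictMono k →
      ∃ C : (Fin m → ℕ+) → Fin (n + 1) → Set (Set X),
      ∃ D : (Fin m → ℕ+) → (i : Fin m) → Fin (F i + 1) → Set (Set X),
        ∀ l : Fin m → ℕ+, (∀ r : Fin m, l r ≤ h (k r.succ)) →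
          ((∀ j, UnifBounded (C l j)) ∧
           (∀ i s, UnifBounded (D l i s)) ∧
           (∀ j, RDisjoint ((k 0 : ℕ) : ℝ) (C l j)) ∧
           (∀ (i : Fin m) (s : Fin (F i + 1)), RDisjoint ((k i.succ : ℕ) : ℝ) (D l i s)) ∧
           ((⋃ j, ⋃₀ C l j) ∪ (⋃ i, ⋃ s, ⋃₀ D l i s) = Set.univ)) ∧
          (∀ (i : Fin m) (s : Fin (F i + 1)),
            (∀ t : ℕ+, t ≤ h (k i.succ) →
              (⋃₀ D (Function.update l i t) i s).Nonempty) ∧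
            (∀ t t' : ℕ+, t ≤ h (k i.succ) → t' ≤ h (k i.succ) → t ≠ t' →
              Disjoint (⋃₀ D (Function.update l i t) i s)
                (⋃₀ D (Function.update l i t') i s)) ∧
            RDisjoint ((k i.succ : ℕ) : ℝ)
              (⋃ t ∈ {t : ℕ+ | t ≤ h (k i.succ)}, D (Function.update l i t) i s))

/-- The word length of `g` with respect to the symmetrized generating set `S ∪ S⁻¹`. -/
noncomputable def wordLength {G : Type*} [Group G] (S : Set G) (g : G) : ℕ :=
  sInf {n : ℕ | ∃ L : List G, (∀ x ∈ L, x ∈ S ∨ x⁻¹ ∈ S) ∧ L.prod = g ∧ L.length = n}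

/-- A group is FC if every conjugacy class is finite. -/
def IsFCGroup (G : Type*) [Group G] : Prop :=
  ∀ x : G, Set.Finite {y : G | ∃ g : G, g * x * g⁻¹ = y}

/-- A metric on a countable discrete space is proper if every ball is finite. -/
def ProperMet (X : Type*) [MetricSpace X] : Prop :=
  ∀ (x : X) (R : ℝ), (Metric.closedBall x R).Finite

/-- Left invariance of a metric on a group. -/
def LeftInvariant (G : Type*) [Group G] [MetricSpace G] : Prop :=
  ∀ g x y : G, dist (g * x) (g * y) = dist x y

/-- Bornologous maps. -/
def Bornologous [MetricSpace X] [MetricSpace Y] (f : X → Y) : Prop :=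
  ∀ R : ℝ, 0 < R → ∃ P : ℝ, 0 < P ∧ ∀ x y : X, dist x y < R → dist (f x) (f y) < P

/-- Coarse embeddings. -/
def CoarseEmbedding [MetricSpace X] [MetricSpace Y] (f : X → Y) : Prop :=
  ∃ ρminus ρplus : ℝ → ℝ, Monotone ρminus ∧ Monotone ρplus ∧
    Filter.Tendsto ρminus Filter.atTop Filter.atTop ∧
    (∀ x y : X, ρminus (dist x y) ≤ dist (f x) (f y) ∧ dist (f x) (f y) ≤ ρplus (dist x y))

/-- Coarse equivalences: coarse embeddings with coarsely dense image. -/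
def CoarseEquiv [MetricSpace X] [MetricSpace Y] (f : X → Y) : Prop :=
  CoarseEmbedding f ∧ ∃ C : ℝ, 0 < C ∧ ∀ y : Y, ∃ x : X, dist y (f x) ≤ C

end APC

namespace APC

lemma ordLE_iff {α : Ordinal.{0}} {M : Set (Finset ℕ)} :
    OrdLE α M ↔ (M = ∅ ∨ ∀ a : ℕ, ∃ β : Ordinal.{0}, ∃ _ : β < α, OrdLE β (deriv M a)) := by
  have h := Ordinal.lt_wf.fix_eq (C := fun _ => Set (Finset ℕ) → Prop)
    (fun α IH M => M = ∅ ∨ ∀ a : ℕ, ∃ β : Ordinal.{0}, ∃ hβ : β < α, IH β hβ (deriv M a)) α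
  exact iff_of_eq (congrFun h M)


end APC


namespace APC

lemma image_succ_insert (b : ℕ → ℕ) (n : ℕ) :
    insert (b 0) (Finset.image (fun k => b (k+1)) (Finset.range (n+1)))
      = Finset.image b (Finset.range (n+2)) := by
  ext x
  simp only [Finset.mem_insert, Finset.mem_image, Finset.mem_range]
  constructor
  · rintro (rfl | ⟨k, hk, rfl⟩)
    · exact ⟨0, by omega, rfl⟩
    · exact ⟨k + 1, by omega, rfl⟩
  · rintro ⟨k, hk, rfl⟩
    cases k with
    | zero => exact Or.inl rfl
    | succ k => exact Or.inr ⟨k, by omega, rfl⟩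

lemma no_inj_branch_of_ordLE (α : Ordinal.{0}) :
    ∀ M : Set (Finset ℕ), OrdLE α M →
      ∀ b : ℕ → ℕ, Function.Injective b →
        ∃ n, Finset.image b (Finset.range (n+1)) ∉ M := by
  induction α using Ordinal.induction with
  | h α IH =>
    intro M hM b hb
    by_contra hc
    push_neg at hc
    rcases ordLE_iff.mp hM with h0 | hstep
    · have := hc 0
      rw [h0] at this
      exact this
    · obtain ⟨β, hβ, hβM⟩ := hstep (b 0)
      have hb' : Function.Injective (fun k => b (k+1)) := by
        intro x y h
        have := hb h
        omega
      obtain ⟨n, hn⟩ := IH β hβ _ hβM (fun k => b (k+1)) hb'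
      apply hn
      refine ⟨⟨b 1, Finset.mem_image.mpr ⟨0, by simp, rfl⟩⟩, ?_, ?_⟩
      · intro hmem
        obtain ⟨k, _, hk⟩ := Finset.mem_image.mp hmem
        exact Nat.succ_ne_zero k (hb hk)
      · rw [image_succ_insert]
        exact hc (n + 1)

/-- The extension relation on finsets: `τ` extends `σ` by one new element and lies in `M`. -/
def ExtRel (M : Set (Finset ℕ)) (τ σ : Finset ℕ) : Prop :=
  (∃ a ∉ σ, τ = insert a σ) ∧ τ ∈ M

lemma extRel_wf {M : Set (Finset ℕ)}
    (hdc : ∀ σ ∈ M, ∀ τ, τ ⊆ σ → τ.Nonempty → τ ∈ M)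
    (hnb : ∀ b : ℕ → ℕ, StrictMono b → ∃ n, Finset.image b (Finset.range (n+1)) ∉ M) :
    WellFounded (ExtRel M) := by
  constructor
  intro x₀
  by_contra hx₀
  have hex : ∀ y : {a : Finset ℕ // ¬Acc (ExtRel M) a},
      ∃ z : {a : Finset ℕ // ¬Acc (ExtRel M) a}, ExtRel M z.1 y.1 := by
    rintro ⟨y, hy⟩
    obtain ⟨z, hz, hr⟩ := exists_not_acc_lt_of_not_acc hy
    exact ⟨⟨z, hz⟩, hr⟩
  choose g hg using hex
  set σ : ℕ → Finset ℕ := fun n => (g^[n] ⟨x₀, hx₀⟩).1 with hσ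
  have hstep : ∀ n, ExtRel M (σ (n+1)) (σ n) := by
    intro n
    have : g^[n+1] ⟨x₀, hx₀⟩ = g (g^[n] ⟨x₀, hx₀⟩) := Function.iterate_succ_apply' g n _
    rw [hσ]
    simp only [this]
    exact hg _
  have hmono : Monotone σ := by
    apply monotone_nat_of_le_succ
    intro n
    obtain ⟨⟨a, _, ha⟩, _⟩ := hstep n
    rw [ha]
    exact Finset.subset_insert _ _
  have hcard : ∀ n, n ≤ (σ n).card := by
    intro n
    induction n with
    | zero => exact Nat.zero_le _
    | succ n ih =>
      obtain ⟨⟨a, haσ, ha⟩, _⟩ := hstep n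
      have : (σ (n+1)).card = (σ n).card + 1 := by
        rw [ha, Finset.card_insert_of_notMem haσ]
      omega
  set A : Set ℕ := {x | ∃ n, x ∈ σ n} with hA
  have hAinf : A.Infinite := by
    intro hF
    have hsub : ∀ n, σ n ⊆ hF.toFinset := by
      intro n x hx
      exact hF.mem_toFinset.mpr ⟨n, hx⟩
    have := Finset.card_le_card (hsub (hF.toFinset.card + 1))
    have := hcard (hF.toFinset.card + 1)
    omega
  set b : ℕ → ℕ := Nat.nth (· ∈ A) with hb
  have hbmono : StrictMono b := Nat.nth_strictMono hAinf
  have hbmem : ∀ n, b n ∈ A := fun n => Nat.nth_mem_of_infinite hAinf n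
  -- any finset contained in A is contained in some σ N
  have hfin : ∀ τ : Finset ℕ, (∀ x ∈ τ, x ∈ A) → ∃ N, τ ⊆ σ N := by
    intro τ
    induction τ using Finset.induction with
    | empty => exact fun _ => ⟨0, Finset.empty_subset _⟩
    | insert _ _ hx ih =>
      rename_i c s
      intro hmem
      obtain ⟨N₁, hN₁⟩ := ih (fun x hxs => hmem x (Finset.mem_insert_of_mem hxs))
      obtain ⟨N₂, hN₂⟩ := hmem c (Finset.mem_insert_self _ _)
      refine ⟨max N₁ N₂, ?_⟩
      intro x hxmem
      rcases Finset.mem_insert.mp hxmem with rfl | hxs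
      · exact hmono (le_max_right _ _) hN₂
      · exact hmono (le_max_left _ _) (hN₁ hxs)
  obtain ⟨n, hn⟩ := hnb b hbmono
  apply hn
  have hsubA : ∀ x ∈ Finset.image b (Finset.range (n+1)), x ∈ A := by
    intro x hx
    obtain ⟨k, _, rfl⟩ := Finset.mem_image.mp hx
    exact hbmem k
  obtain ⟨N, hN⟩ := hfin _ hsubA
  have hσN1 : σ (N + 1) ∈ M := (hstep N).2
  exact hdc _ hσN1 _ (hN.trans (hmono (Nat.le_succ N)))
    ⟨b 0, Finset.mem_image.mpr ⟨0, by simp, rfl⟩⟩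

end APC

namespace APC

def restr (M : Set (Finset ℕ)) (σ : Finset ℕ) : Set (Finset ℕ) :=
  {τ | τ.Nonempty ∧ (∀ a ∈ τ, a ∉ σ) ∧ τ ∪ σ ∈ M}

lemma deriv_restr_mem {M : Set (Finset ℕ)} {σ : Finset ℕ} {a : ℕ} (ha : a ∈ σ) :
    deriv (restr M σ) a = ∅ := by
  ext τ
  simp only [deriv, Set.mem_setOf_eq, Set.mem_empty_iff_false, iff_false, not_and]
  intro _ _ hins
  exact (hins.2.1 a (Finset.mem_insert_self a τ)) ha

lemma deriv_restr_not_mem {M : Set (Finset ℕ)} {σ : Finset ℕ} {a : ℕ} (ha : a ∉ σ) :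
    deriv (restr M σ) a = restr M (insert a σ) := by
  ext τ
  simp only [deriv, restr, Set.mem_setOf_eq]
  constructor
  · rintro ⟨hne, haτ, _, hdisj, hmem⟩
    refine ⟨hne, ?_, ?_⟩
    · intro x hx
      simp only [Finset.mem_insert, not_or]
      exact ⟨fun h => haτ (h ▸ hx), hdisj x (Finset.mem_insert_of_mem hx)⟩
    · have : insert a τ ∪ σ = τ ∪ insert a σ := by
        rw [Finset.insert_union, Finset.union_insert]
      rwa [← this]
  · rintro ⟨hne, hdisj, hmem⟩
    have haτ : a ∉ τ := fun h => (hdisj a h) (Finset.mem_insert_self a σ)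
    refine ⟨hne, haτ, ⟨a, Finset.mem_insert_self a τ⟩, ?_, ?_⟩
    · intro x hx
      rcases Finset.mem_insert.mp hx with rfl | hx
      · exact ha
      · exact fun hσ => (hdisj x hx) (Finset.mem_insert_of_mem hσ)
    · have : insert a τ ∪ σ = τ ∪ insert a σ := by
        rw [Finset.insert_union, Finset.union_insert]
      rwa [this]

lemma restr_empty {M : Set (Finset ℕ)} (hne : ∀ σ ∈ M, Finset.Nonempty σ) :
    restr M ∅ = M := by
  ext τ
  constructor
  · rintro ⟨_, _, h⟩
    rwa [Finset.union_empty] at h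
  · intro h
    exact ⟨hne τ h, fun a _ => Finset.notMem_empty a, by rwa [Finset.union_empty]⟩

lemma ordLE_of_no_branch {M : Set (Finset ℕ)}
    (hne : ∀ σ ∈ M, Finset.Nonempty σ)
    (hdc : ∀ σ ∈ M, ∀ τ, τ ⊆ σ → τ.Nonempty → τ ∈ M)
    (hnb : ∀ b : ℕ → ℕ, StrictMono b → ∃ n, Finset.image b (Finset.range (n+1)) ∉ M) :
    ∃ α : Ordinal.{0}, α.card ≤ Cardinal.aleph0 ∧ OrdLE α M := by
  have hwf : WellFounded (ExtRel M) := extRel_wf hdc hnb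
  haveI : IsWellFounded (Finset ℕ) (ExtRel M) := ⟨hwf⟩
  set ρ : Finset ℕ → Ordinal.{0} := IsWellFounded.rank (ExtRel M) with hρ
  have hlim : Order.IsSuccLimit (Cardinal.ord (Cardinal.aleph 1)) :=
    Cardinal.isSuccLimit_ord Cardinal.aleph0_lt_aleph_one.le
  have hcb : ∀ σ, ρ σ < (Cardinal.aleph 1).ord := by
    intro σ
    induction σ using hwf.induction with
    | _ σ IH =>
      rw [hρ, IsWellFounded.rank_eq]
      apply Cardinal.iSup_lt_ord_lift_of_isRegular Cardinal.isRegular_aleph_one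
      · rw [Cardinal.lift_id]
        exact lt_of_le_of_lt Cardinal.mk_le_aleph0 Cardinal.aleph0_lt_aleph_one
      · rintro ⟨τ, hτ⟩
        exact hlim.succ_lt (IH τ hτ)
  have key : ∀ σ : Finset ℕ, OrdLE (Order.succ (ρ σ)) (restr M σ) := by
    intro σ
    induction σ using hwf.induction with
    | _ σ IH =>
      rw [ordLE_iff]
      right
      intro a
      by_cases haσ : a ∈ σ
      · refine ⟨0, ⟨?_, ?_⟩⟩
        · exact lt_of_le_of_lt (zero_le (a := _)) (Order.lt_succ _)
        · rw [deriv_restr_mem haσ]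
          exact ordLE_iff.mpr (Or.inl rfl)
      · rw [deriv_restr_not_mem haσ]
        by_cases hM : insert a σ ∈ M
        · have hrel : ExtRel M (insert a σ) σ := ⟨⟨a, haσ, rfl⟩, hM⟩
          refine ⟨Order.succ (ρ (insert a σ)), ⟨?_, IH _ hrel⟩⟩
          exact Order.succ_lt_succ (IsWellFounded.rank_lt_of_rel hrel)
        · have : restr M (insert a σ) = ∅ := by
            ext τ
            simp only [restr, Set.mem_setOf_eq, Set.mem_empty_iff_false, iff_false, not_and]
            intro _ _ hmem
            exact hM (hdc _ hmem _ Finset.subset_union_right ⟨a, Finset.mem_insert_self a σ⟩)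
          rw [this]
          exact ⟨0, lt_of_le_of_lt (zero_le (a := _)) (Order.lt_succ _),
            ordLE_iff.mpr (Or.inl rfl)⟩
  refine ⟨Order.succ (ρ ∅), ?_, ?_⟩
  · have h1 : Order.succ (ρ ∅) < (Cardinal.aleph 1).ord := hlim.succ_lt (hcb ∅)
    have h2 := Cardinal.lt_ord.mp h1
    rwa [← Cardinal.succ_aleph0, Order.lt_succ_iff] at h2
  · have := key ∅
    rwa [restr_empty hne] at this

end APC

namespace APC

variable {X : Type*} [MetricSpace X]

lemma unifBounded_empty : UnifBounded (∅ : Set (Set X)) :=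
  ⟨1, one_pos, fun U hU => absurd hU (Set.notMem_empty U)⟩

lemma rDisjoint_empty (r : ℝ) : RDisjoint r (∅ : Set (Set X)) :=
  fun U hU => absurd hU (Set.notMem_empty U)

lemma rDisjoint_mono {r r' : ℝ} (h : r ≤ r') {𝒰 : Set (Set X)} (hd : RDisjoint r' 𝒰) :
    RDisjoint r 𝒰 :=
  fun U hU V hV hUV x hx y hy => le_trans h (hd U hU V hV hUV x hx y hy)

lemma aclass_down {σ τ : Finset ℕ} (hσ : σ ∈ AClass X) (hτσ : τ ⊆ σ) (hτ : τ.Nonempty) :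
    τ ∈ AClass X := by
  refine ⟨hτ, fun h => hσ.2 ?_⟩
  obtain ⟨𝒰, hub, hd, hcov⟩ := h
  refine ⟨fun i => if i ∈ τ then 𝒰 i else ∅, ?_, ?_, ?_⟩
  · intro i _
    by_cases h : i ∈ τ
    · simpa [h] using hub i h
    · simpa [h] using unifBounded_empty
  · intro i _
    by_cases h : i ∈ τ
    · simpa [h] using hd i h
    · simpa [h] using rDisjoint_empty (X := X) (i : ℝ)
  · rw [Set.eq_univ_iff_forall]
    intro x
    have hx : x ∈ ⋃ i ∈ τ, ⋃₀ 𝒰 i := hcov ▸ Set.mem_univ x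
    simp only [Set.mem_iUnion, Set.mem_sUnion] at hx ⊢
    obtain ⟨i, hiτ, U, hU, hxU⟩ := hx
    exact ⟨i, hτσ hiτ, U, by rw [if_pos hiτ]; exact hU, hxU⟩

end APC

open APC Set

theorem hasAPC_iff_trasdim_le_countable_ordinal {X : Type*} [MetricSpace X] :
    HasAPC X ↔ ∃ α : Ordinal.{0}, α.card ≤ Cardinal.aleph0 ∧ TrasdimLE X α := by
  constructor
  · intro hapc
    apply ordLE_of_no_branch (fun σ hσ => hσ.1)
      (fun σ hσ τ hτσ hτ => aclass_down hσ hτσ hτ)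
    intro b hb
    by_contra hcon
    push_neg at hcon
    set R : ℕ → ℝ := fun i => (b (i+1) : ℝ) with hR
    have hpos : ∀ i, 0 < R i := by
      intro i
      have : 0 < b (i+1) := lt_of_lt_of_le (Nat.succ_pos i) hb.le_apply
      show (0:ℝ) < (b (i+1) : ℝ)
      exact_mod_cast this
    have hRm : StrictMono R := fun i j h => Nat.cast_lt.mpr (hb (by omega))
    obtain ⟨n, 𝒰, hub, hd, hcov⟩ := hapc R hpos hRm
    set τ : Finset ℕ := Finset.image (fun k => b (k+1)) (Finset.range (n+1)) with hτdef
    have hτA : τ ∈ AClass X := by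
      apply aclass_down (hcon (n+1))
      · rw [← image_succ_insert b n]
        exact Finset.subset_insert _ _
      · exact ⟨b 1, Finset.mem_image.mpr ⟨0, by simp, rfl⟩⟩
    apply hτA.2
    set V : ℕ → Set (Set X) := fun i => {U | ∃ j : Fin (n+1), b (j.1+1) = i ∧ U ∈ 𝒰 j}
      with hVdef
    have hVeq : ∀ j : Fin (n+1), V (b (j.1+1)) = 𝒰 j := by
      intro j
      ext U
      constructor
      · rintro ⟨j', hj', hU⟩
        have : j' = j := Fin.ext (by have := hb.injective hj'; omega)
        rwa [← this]
      · exact fun hU => ⟨j, rfl, hU⟩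
    refine ⟨V, ?_, ?_, ?_⟩
    · intro i hi
      obtain ⟨k, hk, rfl⟩ := Finset.mem_image.mp hi
      have := hVeq ⟨k, Finset.mem_range.mp hk⟩
      rw [this]
      exact hub _
    · intro i hi
      obtain ⟨k, hk, rfl⟩ := Finset.mem_image.mp hi
      have := hVeq ⟨k, Finset.mem_range.mp hk⟩
      rw [this]
      exact hd ⟨k, Finset.mem_range.mp hk⟩
    · rw [Set.eq_univ_iff_forall]
      intro x
      have hx : x ∈ ⋃ j, ⋃₀ 𝒰 j := hcov ▸ Set.mem_univ x
      simp only [Set.mem_iUnion, Set.mem_sUnion] at hx ⊢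
      obtain ⟨j, U, hU, hxU⟩ := hx
      exact ⟨b (j.1+1), Finset.mem_image.mpr ⟨j.1, Finset.mem_range.mpr j.isLt, rfl⟩,
        U, ⟨j, rfl, hU⟩, hxU⟩
  · rintro ⟨α, _, hα⟩
    intro R hRpos hRmono
    set m : ℕ → ℕ := fun i => ⌈R i⌉₊ + i + 1 with hm
    have hmmono : StrictMono m := by
      apply strictMono_nat_of_lt_succ
      intro i
      have h1 : ⌈R i⌉₊ ≤ ⌈R (i+1)⌉₊ := Nat.ceil_le_ceil (hRmono.monotone (Nat.le_succ i))
      simp only [hm]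
      omega
    have hml : ∀ i : ℕ, R i ≤ (m i : ℝ) := by
      intro i
      calc R i ≤ (⌈R i⌉₊ : ℝ) := Nat.le_ceil _
        _ ≤ (m i : ℝ) := by
            show ((⌈R i⌉₊ : ℕ) : ℝ) ≤ ((⌈R i⌉₊ + i + 1 : ℕ) : ℝ)
            exact Nat.cast_le.mpr (by omega)
    obtain ⟨n, hn⟩ := no_inj_branch_of_ordLE α _ hα m hmmono.injective
    set σ : Finset ℕ := Finset.image m (Finset.range (n+1)) with hσdef
    have hσne : σ.Nonempty := ⟨m 0, Finset.mem_image.mpr ⟨0, by simp, rfl⟩⟩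
    have h𝒰 : ∃ 𝒰 : ℕ → Set (Set X),
        (∀ i ∈ σ, UnifBounded (𝒰 i)) ∧ (∀ i ∈ σ, RDisjoint (i : ℝ) (𝒰 i)) ∧
        (⋃ i ∈ σ, ⋃₀ 𝒰 i) = Set.univ := by
      by_contra h
      exact hn ⟨hσne, h⟩
    obtain ⟨𝒰, hub, hd, hcov⟩ := h𝒰
    have hmem : ∀ j : Fin (n+1), m j.1 ∈ σ :=
      fun j => Finset.mem_image.mpr ⟨j.1, Finset.mem_range.mpr j.isLt, rfl⟩
    refine ⟨n, fun j => 𝒰 (m j.1), fun j => hub _ (hmem j),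
      fun j => rDisjoint_mono (hml j.1) (hd _ (hmem j)), ?_⟩
    rw [Set.eq_univ_iff_forall]
    intro x
    have hx : x ∈ ⋃ i ∈ σ, ⋃₀ 𝒰 i := hcov ▸ Set.mem_univ x
    simp only [Set.mem_iUnion, Set.mem_sUnion] at hx ⊢
    obtain ⟨i, hiσ, U, hU, hxU⟩ := hx
    obtain ⟨k, hk, rfl⟩ := Finset.mem_image.mp hiσ
    exact ⟨⟨k, Finset.mem_range.mp hk⟩, U, hU, hxU⟩
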